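/- arXiv:0905.2478 — 3 statements merged into one kernel-verified Lean document; each statement's English description precedes it below -/
import Mathlib

section
/- Let T be a finite tree (a connected acyclic simple graph) with at least 3 vertices such that every vertex of degree two in T is adjacent to a leaf of T. Then T contains at least one vertex of Type I, Type II, or Type III. -/
/-- A leaf of a graph is a vertex of degree one. -/
def SimpleGraph.IsLeaf {V : Type*} [Fintype V] (T : SimpleGraph V) [DecidableRel T.Adj]
    (v : V) : Prop :=
  T.degree v = 1

/-- A vertex `w` is of Type I if `w` is adjacent to a leaf and also adjacent to a
degree-two vertex which is adjacent to a leaf. -/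
def SimpleGraph.IsTypeI {V : Type*} [Fintype V] (T : SimpleGraph V) [DecidableRel T.Adj]
    (w : V) : Prop :=
  (∃ l, T.Adj w l ∧ T.IsLeaf l) ∧
    (∃ u, T.Adj w u ∧ T.degree u = 2 ∧ ∃ l, T.Adj u l ∧ T.IsLeaf l)

/-- A vertex `w` is of Type II if `w` is adjacent to two distinct degree-two vertices
each of which is adjacent to a leaf. -/
def SimpleGraph.IsTypeII {V : Type*} [Fintype V] (T : SimpleGraph V) [DecidableRel T.Adj]
    (w : V) : Prop :=
  ∃ u₁ u₂, u₁ ≠ u₂ ∧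
    T.Adj w u₁ ∧ T.degree u₁ = 2 ∧ (∃ l, T.Adj u₁ l ∧ T.IsLeaf l) ∧
    T.Adj w u₂ ∧ T.degree u₂ = 2 ∧ (∃ l, T.Adj u₂ l ∧ T.IsLeaf l)

/-- A vertex `w` is of Type III if `w` is adjacent to two distinct leaves. -/
def SimpleGraph.IsTypeIII {V : Type*} [Fintype V] (T : SimpleGraph V) [DecidableRel T.Adj]
    (w : V) : Prop :=
  ∃ l₁ l₂, l₁ ≠ l₂ ∧ T.Adj w l₁ ∧ T.IsLeaf l₁ ∧ T.Adj w l₂ ∧ T.IsLeaf l₂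


open SimpleGraph Finset

section Aux

variable {V : Type*} {T : SimpleGraph V}

lemma aux_mem_support {x t w : V} (p : T.Walk x t) (hw : w ∈ p.support) (hne : w ≠ x) :
    T.dist w t + 1 ≤ p.length := by
  classical
  have h2 : T.dist w t ≤ (p.dropUntil w hw).length := SimpleGraph.dist_le _
  have h3 : (p.takeUntil w hw).length + (p.dropUntil w hw).length = p.length := by
    rw [← SimpleGraph.Walk.length_append, p.take_spec hw]
  have h4 : (p.takeUntil w hw).length ≠ 0 := fun h =>
    hne (SimpleGraph.Walk.eq_of_length_eq_zero h).symm
  omega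

lemma aux_adj_dist_ne (hT : T.IsTree) {a b t : V} (hab : T.Adj a b) :
    T.dist a t ≠ T.dist b t := by
  intro heq
  obtain ⟨pb, hpb, hlb⟩ := hT.isConnected.exists_path_of_dist b t
  by_cases hmem : a ∈ pb.support
  · have := aux_mem_support pb hmem hab.ne
    omega
  · obtain ⟨pa, hpa, hla⟩ := hT.isConnected.exists_path_of_dist a t
    have h1 := (hT.existsUnique_path a t).unique hpa (hpb.cons hmem (h := hab))
    have h2 : pa.length = pb.length + 1 := by rw [h1]; simp
    omega

lemma aux_adj_dist (hT : T.IsTree) {a b t : V} (hab : T.Adj a b) :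
    T.dist b t = T.dist a t + 1 ∨ T.dist a t = T.dist b t + 1 := by
  have h1 : T.dist a b = 1 := SimpleGraph.dist_eq_one_iff_adj.mpr hab
  have h1' : T.dist b a = 1 := SimpleGraph.dist_eq_one_iff_adj.mpr hab.symm
  have h2 := hT.isConnected.dist_triangle (u := a) (v := b) (w := t)
  have h3 := hT.isConnected.dist_triangle (u := b) (v := a) (w := t)
  have h5 := aux_adj_dist_ne hT hab (t := t)
  omega

lemma aux_parent_unique (hT : T.IsTree) {w x y t : V} (hx : T.Adj w x) (hy : T.Adj w y)
    (hdx : T.dist x t + 1 = T.dist w t) (hdy : T.dist y t + 1 = T.dist w t) : x = y := by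
  obtain ⟨px, hpx, hlx⟩ := hT.isConnected.exists_path_of_dist x t
  obtain ⟨py, hpy, hly⟩ := hT.isConnected.exists_path_of_dist y t
  have hwx : w ∉ px.support := fun hm => by
    have := aux_mem_support px hm hx.ne
    omega
  have hwy : w ∉ py.support := fun hm => by
    have := aux_mem_support py hm hy.ne
    omega
  have h1 := (hT.existsUnique_path w t).unique (hpx.cons hwx (h := hx)) (hpy.cons hwy (h := hy))
  have := congrArg (fun q : T.Walk w t => q.getVert 1) h1
  simpa using this

lemma aux_parent_exists (hT : T.IsTree) {w t : V} (hne : w ≠ t) :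
    ∃ x, T.Adj w x ∧ T.dist x t + 1 = T.dist w t := by
  obtain ⟨p, hp, hl⟩ := hT.isConnected.exists_path_of_dist w t
  cases p with
  | nil => exact absurd rfl hne
  | @cons _ b _ h q =>
    refine ⟨b, h, ?_⟩
    have h1 : T.dist b t ≤ q.length := SimpleGraph.dist_le q
    have h2 : q.length + 1 = T.dist w t := by simpa using hl
    have h3 := hT.isConnected.dist_triangle (u := w) (v := b) (w := t)
    have h4 : T.dist w b = 1 := SimpleGraph.dist_eq_one_iff_adj.mpr h
    omega

end Aux

/-- **Lemma 2 of the paper.** Every finite tree with at least 3 vertices in which every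
degree-two vertex is adjacent to a leaf contains a vertex of Type I, Type II, or Type III. -/
theorem tree_has_typeI_II_or_III {V : Type*} [Fintype V] (T : SimpleGraph V)
    [DecidableRel T.Adj] (hT : T.IsTree) (hcard : 3 ≤ Fintype.card V)
    (hdeg2 : ∀ v, T.degree v = 2 → ∃ l, T.Adj v l ∧ T.IsLeaf l) :
    ∃ w, T.IsTypeI w ∨ T.IsTypeII w ∨ T.IsTypeIII w := by
  classical
  have hne : Nonempty V := Fintype.card_pos_iff.mp (by omega)
  obtain ⟨⟨u, v⟩, -, hmax⟩ := Finset.exists_max_image (Finset.univ : Finset (V × V))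
    (fun p => T.dist p.1 p.2) ⟨(Classical.arbitrary V, Classical.arbitrary V), Finset.mem_univ _⟩
  set d := T.dist u v with hd
  have hmax' : ∀ a b : V, T.dist a b ≤ d := fun a b => hmax (a, b) (Finset.mem_univ _)
  -- d ≥ 2
  have hd2 : 2 ≤ d := by
    have hsum : ∑ w, T.degree w = 2 * T.edgeFinset.card :=
      SimpleGraph.sum_degrees_eq_twice_card_edges T
    have hcnt : T.edgeFinset.card + 1 = Fintype.card V := hT.card_edgeFinset
    have hw2 : ∃ w, 2 ≤ T.degree w := by
      by_contra h
      push_neg at h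
      have hle : ∑ w, T.degree w ≤ ∑ _w : V, 1 :=
        Finset.sum_le_sum (fun i _ => by have := h i; omega)
      simp only [Finset.sum_const, Finset.card_univ, smul_eq_mul, mul_one] at hle
      omega
    obtain ⟨w, hw⟩ := hw2
    obtain ⟨a, ha, b, hb, hab⟩ := Finset.one_lt_card.mp hw
    rw [SimpleGraph.mem_neighborFinset] at ha hb
    have h0 := aux_adj_dist hT ha.symm (t := b)
    have h1 : T.dist w b = 1 := SimpleGraph.dist_eq_one_iff_adj.mpr hb
    have h2 : T.dist a b ≠ 0 := fun h => hab (hT.isConnected.dist_eq_zero_iff.mp h)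
    have := hmax' a b
    omega
  -- every vertex at distance d from v is a leaf
  have hleaf : ∀ w, T.dist w v = d → T.IsLeaf w := by
    intro w hwd
    have hwv : w ≠ v := by
      intro h; subst h
      rw [SimpleGraph.dist_self] at hwd; omega
    obtain ⟨x, hx, hdx⟩ := aux_parent_exists hT hwv
    have hnb : T.neighborFinset w = {x} := by
      ext y
      simp only [SimpleGraph.mem_neighborFinset, Finset.mem_singleton]
      constructor
      · intro hy
        rcases aux_adj_dist hT hy (t := v) with h | h
        · exfalso; have := hmax' y v; omega
        · exact aux_parent_unique hT (t := v) hy hx (by omega) (by omega)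
      · rintro rfl; exact hx
    rw [SimpleGraph.IsLeaf, ← SimpleGraph.card_neighborFinset_eq_degree, hnb,
      Finset.card_singleton]
  have hu_leaf : T.IsLeaf u := hleaf u rfl
  have huv : u ≠ v := fun h => by
    rw [h, SimpleGraph.dist_self] at hd; omega
  obtain ⟨v1, hv1adj, hv1d⟩ := aux_parent_exists hT huv
  by_cases hA : ∃ y, T.Adj v1 y ∧ T.dist y v = d ∧ y ≠ u
  · obtain ⟨y, hy1, hy2, hy3⟩ := hA
    exact ⟨v1, Or.inr (Or.inr ⟨u, y, fun h => hy3 h.symm, hv1adj.symm, hu_leaf, hy1,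
      hleaf y hy2⟩)⟩
  push_neg at hA
  have hv1v : v1 ≠ v := by
    intro h; rw [h, SimpleGraph.dist_self] at hv1d; omega
  obtain ⟨v2, hv2adj, hv2d⟩ := aux_parent_exists hT hv1v
  have hne_uv2 : u ≠ v2 := by intro h; rw [← h] at hv2d; omega
  have hnb_v1 : T.neighborFinset v1 = {u, v2} := by
    ext y
    simp only [SimpleGraph.mem_neighborFinset, Finset.mem_insert, Finset.mem_singleton]
    constructor
    · intro hy
      rcases aux_adj_dist hT hy (t := v) with h | h
      · left; exact hA y hy (by omega)
      · right; exact aux_parent_unique hT (t := v) hy hv2adj (by omega) (by omega)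
    · rintro (rfl | rfl)
      exacts [hv1adj.symm, hv2adj]
  have hdeg_v1 : T.degree v1 = 2 := by
    rw [← SimpleGraph.card_neighborFinset_eq_degree, hnb_v1, Finset.card_pair hne_uv2]
  by_cases hB : ∃ c, T.Adj v2 c ∧ T.dist c v = T.dist v1 v ∧ c ≠ v1
  · obtain ⟨c, hc_adj, hc_d, hc_ne⟩ := hB
    by_cases hC : ∃ y, T.Adj c y ∧ T.dist y v = d
    · obtain ⟨y, hy_adj, hy_d⟩ := hC
      by_cases hD : ∃ y', T.Adj c y' ∧ T.dist y' v = d ∧ y' ≠ y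
      · obtain ⟨y', h1, h2, h3⟩ := hD
        exact ⟨c, Or.inr (Or.inr ⟨y, y', fun h => h3 h.symm, hy_adj, hleaf y hy_d, h1,
          hleaf y' h2⟩)⟩
      push_neg at hD
      have hne_cy : v2 ≠ y := by intro h; rw [← h] at hy_d; omega
      have hnb_c : T.neighborFinset c = {v2, y} := by
        ext z
        simp only [SimpleGraph.mem_neighborFinset, Finset.mem_insert, Finset.mem_singleton]
        constructor
        · intro hz
          rcases aux_adj_dist hT hz (t := v) with h | h
          · right; exact hD z hz (by omega)
          · left; exact aux_parent_unique hT (t := v) hz hc_adj.symm (by omega) (by omega)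
        · rintro (rfl | rfl)
          exacts [hc_adj.symm, hy_adj]
      have hdeg_c : T.degree c = 2 := by
        rw [← SimpleGraph.card_neighborFinset_eq_degree, hnb_c, Finset.card_pair hne_cy]
      exact ⟨v2, Or.inr (Or.inl ⟨v1, c, fun h => hc_ne h.symm, hv2adj.symm, hdeg_v1,
        ⟨u, hv1adj.symm, hu_leaf⟩, hc_adj, hdeg_c, ⟨y, hy_adj, hleaf y hy_d⟩⟩)⟩
    · push_neg at hC
      have hnb_c : T.neighborFinset c = {v2} := by
        ext z
        simp only [SimpleGraph.mem_neighborFinset, Finset.mem_singleton]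
        constructor
        · intro hz
          rcases aux_adj_dist hT hz (t := v) with h | h
          · exact absurd (by omega : T.dist z v = d) (hC z hz)
          · exact aux_parent_unique hT (t := v) hz hc_adj.symm (by omega) (by omega)
        · rintro rfl; exact hc_adj.symm
      have hleaf_c : T.IsLeaf c := by
        rw [SimpleGraph.IsLeaf, ← SimpleGraph.card_neighborFinset_eq_degree, hnb_c,
          Finset.card_singleton]
      exact ⟨v2, Or.inl ⟨⟨c, hc_adj, hleaf_c⟩, ⟨v1, hv2adj.symm, hdeg_v1, u, hv1adj.symm,
        hu_leaf⟩⟩⟩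
  · push_neg at hB
    by_cases hv2v : v2 = v
    · have h0 : T.dist v2 v = 0 := by rw [hv2v, SimpleGraph.dist_self]
      have hnb : T.neighborFinset v2 = {v1} := by
        ext z
        simp only [SimpleGraph.mem_neighborFinset, Finset.mem_singleton]
        constructor
        · intro hz
          rcases aux_adj_dist hT hz (t := v) with h | h
          · exact hB z hz (by omega)
          · omega
        · rintro rfl; exact hv2adj.symm
      have hleaf_v2 : T.IsLeaf v2 := by
        rw [SimpleGraph.IsLeaf, ← SimpleGraph.card_neighborFinset_eq_degree, hnb,
          Finset.card_singleton]
      exact ⟨v1, Or.inr (Or.inr ⟨u, v2, hne_uv2, hv1adj.symm, hu_leaf, hv2adj, hleaf_v2⟩)⟩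
    · obtain ⟨v3, hv3adj, hv3d⟩ := aux_parent_exists hT hv2v
      have hne_13 : v1 ≠ v3 := by intro h; rw [← h] at hv3d; omega
      have hnb : T.neighborFinset v2 = {v1, v3} := by
        ext z
        simp only [SimpleGraph.mem_neighborFinset, Finset.mem_insert, Finset.mem_singleton]
        constructor
        · intro hz
          rcases aux_adj_dist hT hz (t := v) with h | h
          · left; exact hB z hz (by omega)
          · right; exact aux_parent_unique hT (t := v) hz hv3adj (by omega) (by omega)
        · rintro (rfl | rfl)
          exacts [hv2adj.symm, hv3adj]
      have hdeg_v2 : T.degree v2 = 2 := by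
        rw [← SimpleGraph.card_neighborFinset_eq_degree, hnb, Finset.card_pair hne_13]
      obtain ⟨l, hl_adj, hl_leaf⟩ := hdeg2 v2 hdeg_v2
      exact ⟨v2, Or.inl ⟨⟨l, hl_adj, hl_leaf⟩, ⟨v1, hv2adj.symm, hdeg_v1, u, hv1adj.symm,
        hu_leaf⟩⟩⟩
end

section
/- Let T be a finite tree with at least 3 vertices such that every vertex of degree two in T is adjacent to a leaf, and suppose T has no vertex of Type I, Type II, or Type III. Then for every leaf l of T there exists a vertex w with degree at least 3 such that either w is adjacent to l, or w is adjacent to a degree-two vertex which is adjacent to l. -/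
/-- A set closed under adjacency contains every vertex reachable from a member. -/
lemma walk_mem_closed {V : Type*} {T : SimpleGraph V} {S : Set V}
    (hS : ∀ a ∈ S, ∀ b, T.Adj a b → b ∈ S) {a b : V} (p : T.Walk a b) (ha : a ∈ S) :
    b ∈ S := by
  induction p with
  | nil => exact ha
  | cons h p ih => exact ih (hS _ ha _ h)

/-- A leaf's neighbor set is a singleton. -/
lemma leaf_nbrs {V : Type*} [Fintype V] {T : SimpleGraph V} [DecidableRel T.Adj]
    {l : V} (hl : T.degree l = 1) : ∃ w, T.Adj l w ∧ ∀ b, T.Adj l b → b = w := by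
  classical
  rw [← T.card_neighborFinset_eq_degree, Finset.card_eq_one] at hl
  obtain ⟨w, hw⟩ := hl
  refine ⟨w, ?_, fun b hb => ?_⟩
  · have : w ∈ T.neighborFinset l := hw ▸ Finset.mem_singleton_self w
    simpa using this
  · have : b ∈ T.neighborFinset l := by simpa using hb
    rw [hw] at this; simpa using this

/-- A degree-two vertex adjacent to `a` has another neighbor. -/
lemma deg_two_other {V : Type*} [Fintype V] {T : SimpleGraph V} [DecidableRel T.Adj]
    {v a : V} (hv : T.degree v = 2) (ha : T.Adj v a) :
    ∃ x, x ≠ a ∧ T.Adj v x := by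
  classical
  have hmem : a ∈ T.neighborFinset v := by simpa using ha
  have hcard : ((T.neighborFinset v).erase a).card = 1 := by
    rw [Finset.card_erase_of_mem hmem, T.card_neighborFinset_eq_degree, hv]
  obtain ⟨x, hx⟩ := Finset.card_eq_one.mp hcard
  have hxmem : x ∈ (T.neighborFinset v).erase a := hx ▸ Finset.mem_singleton_self x
  obtain ⟨hxa, hxn⟩ := Finset.mem_erase.mp hxmem
  exact ⟨x, hxa, by simpa using hxn⟩

/-- If a finite tree with at least 3 vertices has every degree-two vertex adjacent to a
leaf and contains no vertex of Type I, II or III, then every leaf `l` admits a vertex `w` of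
degree at least 3 such that `w` is adjacent to `l`, or `w` is adjacent to a degree-two
vertex which is adjacent to `l`. -/
theorem every_leaf_has_root {V : Type*} [Fintype V] (T : SimpleGraph V)
    [DecidableRel T.Adj] (hT : T.IsTree) (hcard : 3 ≤ Fintype.card V)
    (hdeg2 : ∀ v, T.degree v = 2 → ∃ l, T.Adj v l ∧ T.IsLeaf l)
    (hno : ∀ w, ¬ T.IsTypeI w ∧ ¬ T.IsTypeII w ∧ ¬ T.IsTypeIII w) :
    ∀ l, T.IsLeaf l → ∃ w, 3 ≤ T.degree w ∧
      (T.Adj w l ∨ ∃ u, T.Adj w u ∧ T.degree u = 2 ∧ T.Adj u l) := by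
  classical
  intro l hl
  obtain ⟨w, hlw, hwuniq⟩ := leaf_nbrs hl
  have hwl : T.Adj w l := hlw.symm
  have hwpos : 0 < T.degree w := by
    rw [T.degree_pos_iff_exists_adj]; exact ⟨l, hwl⟩
  by_cases hw1 : T.degree w = 1
  · -- the component {l, w} contradicts connectivity with ≥ 3 vertices
    exfalso
    obtain ⟨w', hww', hw'uniq⟩ := leaf_nbrs hw1
    have hw'eq : w' = l := (hw'uniq l hwl).symm
    set S : Set V := {l, w} with hS
    have hclosed : ∀ a ∈ S, ∀ b, T.Adj a b → b ∈ S := by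
      intro a ha b hab
      rcases ha with rfl | rfl
      · right; exact hwuniq b hab
      · left; rw [hw'uniq b hab, hw'eq]
    have : ∃ v : V, v ≠ l ∧ v ≠ w := by
      by_contra h
      push_neg at h
      have hsub : (Finset.univ : Finset V) ⊆ ({l, w} : Finset V) := by
        intro v _
        rcases Classical.em (v = l) with rfl | hv
        · simp
        · simp [h v hv]
      have h1 := Finset.card_le_card hsub
      simp only [Finset.card_univ] at h1
      have h2 : ({l, w} : Finset V).card ≤ 2 := by
        refine (Finset.card_insert_le _ _).trans ?_
        simp
      omega
    obtain ⟨v, hvl, hvw⟩ := this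
    obtain ⟨p⟩ := hT.isConnected.preconnected l v
    have hv : v ∈ S := walk_mem_closed hclosed p (by left; rfl)
    rcases hv with rfl | rfl
    · exact hvl rfl
    · exact hvw rfl
  · by_cases hw2 : T.degree w = 2
    · -- w has degree 2; let x be its other neighbor
      obtain ⟨x, hxl, hwx⟩ := deg_two_other hw2 hwl
      by_cases hx1 : T.degree x = 1
      · -- w is adjacent to two leaves l and x : Type III
        exact absurd ⟨l, x, fun h => hxl h.symm, hwl, hl, hwx, hx1⟩ (hno w).2.2
      · by_cases hx2 : T.degree x = 2
        · -- x is Type I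
          obtain ⟨l', hxl', hl'⟩ := hdeg2 x hx2
          exact absurd ⟨⟨l', hxl', hl'⟩, ⟨w, hwx.symm, hw2, ⟨l, hwl, hl⟩⟩⟩ (hno x).1
        · have hxpos : 0 < T.degree x := by
            rw [T.degree_pos_iff_exists_adj]; exact ⟨w, hwx.symm⟩
          exact ⟨x, by omega, Or.inr ⟨w, hwx.symm, hw2, hwl⟩⟩
    · exact ⟨w, by omega, Or.inl hwl⟩
end

section
/- Let T be a finite tree with at least 3 vertices such that every vertex of degree two in T is adjacent to a leaf, and suppose T has no vertex of Type I, Type II, or Type III. Then the number of vertices of T of degree at least 3 is greater than or equal to the number of leaves of T. -/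
private lemma closed_walk_mem {V : Type*} {T : SimpleGraph V} {S : Set V}
    (hS : ∀ v w, v ∈ S → T.Adj v w → w ∈ S) {a b : V} (p : T.Walk a b) (ha : a ∈ S) :
    b ∈ S := by
  induction p with
  | nil => exact ha
  | cons h _ ih => exact ih (hS _ _ ha h)

private lemma exists_target {V : Type*} [Fintype V] (T : SimpleGraph V)
    [DecidableRel T.Adj] (hT : T.IsTree) (hcard : 3 ≤ Fintype.card V)
    (hdeg2 : ∀ v, T.degree v = 2 → ∃ l, T.Adj v l ∧ T.IsLeaf l)
    (hno : ∀ w, ¬ T.IsTypeI w ∧ ¬ T.IsTypeII w ∧ ¬ T.IsTypeIII w)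
    (l : V) (hl : T.degree l = 1) :
    ∃ w, 3 ≤ T.degree w ∧
      (T.Adj l w ∨ ∃ u, T.Adj l u ∧ T.degree u = 2 ∧ T.Adj u w) := by
  classical
  obtain ⟨u, hu⟩ : ∃ u, T.Adj l u := by
    rw [← SimpleGraph.degree_pos_iff_exists_adj]; omega
  have hupos : 0 < T.degree u := by
    rw [SimpleGraph.degree_pos_iff_exists_adj]; exact ⟨l, hu.symm⟩
  -- T.degree u ≠ 1
  have hu1 : T.degree u ≠ 1 := by
    intro h1
    have huniqL : ∀ x, T.Adj l x → x = u := by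
      intro x hx
      have h1' := Finset.card_le_one.mp (le_of_eq hl)
      exact h1' x (T.mem_neighborFinset l x |>.mpr hx) u (T.mem_neighborFinset l u |>.mpr hu)
    have huniqU : ∀ x, T.Adj u x → x = l := by
      intro x hx
      have h1' := Finset.card_le_one.mp (le_of_eq h1)
      exact h1' x (T.mem_neighborFinset u x |>.mpr hx) l (T.mem_neighborFinset u l |>.mpr hu.symm)
    have hclosed : ∀ v w, v ∈ ({l, u} : Set V) → T.Adj v w → w ∈ ({l, u} : Set V) := by
      intro v w hv hvw
      rcases hv with rfl | rfl
      · exact Or.inr (huniqL w hvw)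
      · exact Or.inl (huniqU w hvw)
    have hall : ∀ v : V, v ∈ ({l, u} : Set V) := by
      intro v
      obtain ⟨p⟩ := hT.isConnected.preconnected l v
      exact closed_walk_mem hclosed p (Or.inl rfl)
    have : (Finset.univ : Finset V) ⊆ {l, u} := by
      intro v _
      rcases hall v with rfl | rfl <;> simp
    have := Finset.card_le_card this
    have h2 : ({l, u} : Finset V).card ≤ 2 := Finset.card_insert_le _ _ |>.trans (by simp)
    simp only [Finset.card_univ] at this
    omega
  rcases eq_or_ne (T.degree u) 2 with hu2 | hu2
  · -- u has degree 2; its other neighbor w has degree ≥ 3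
    have hlmem : l ∈ T.neighborFinset u := (T.mem_neighborFinset u l).mpr hu.symm
    obtain ⟨w, hwmem, hwl⟩ : ∃ w ∈ T.neighborFinset u, w ≠ l := by
      exact Finset.exists_mem_ne (by rw [← SimpleGraph.degree]; omega) l
    have huw : T.Adj u w := (T.mem_neighborFinset u w).mp hwmem
    have hw1 : T.degree w ≠ 1 := by
      intro h1
      exact (hno u).2.2 ⟨w, l, hwl, huw, h1, hu.symm, hl⟩
    have hw2 : T.degree w ≠ 2 := by
      intro h2
      obtain ⟨lw, hwlw, hlwleaf⟩ := hdeg2 w h2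
      exact (hno w).1 ⟨⟨lw, hwlw, hlwleaf⟩, ⟨u, huw.symm, hu2, l, hu.symm, hl⟩⟩
    have hwpos : 0 < T.degree w := by
      rw [SimpleGraph.degree_pos_iff_exists_adj]; exact ⟨u, huw.symm⟩
    exact ⟨w, by omega, Or.inr ⟨u, hu, hu2, huw⟩⟩
  · exact ⟨u, by omega, Or.inl hu⟩

/-- If a finite tree with at least 3 vertices has every degree-two vertex adjacent to a
leaf and contains no vertex of Type I, II or III, then the number of vertices of degree
at least 3 is at least the number of leaves. -/
theorem card_highdeg_ge_card_leaves {V : Type*} [Fintype V] (T : SimpleGraph V)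
    [DecidableRel T.Adj] (hT : T.IsTree) (hcard : 3 ≤ Fintype.card V)
    (hdeg2 : ∀ v, T.degree v = 2 → ∃ l, T.Adj v l ∧ T.IsLeaf l)
    (hno : ∀ w, ¬ T.IsTypeI w ∧ ¬ T.IsTypeII w ∧ ¬ T.IsTypeIII w) :
    (Finset.univ.filter fun v => T.degree v = 1).card ≤
      (Finset.univ.filter fun v => 3 ≤ T.degree v).card := by
  classical
  set f : V → V := fun l =>
    if h : T.degree l = 1 then (exists_target T hT hcard hdeg2 hno l h).choose else l with hf
  have hspec : ∀ l, T.degree l = 1 → 3 ≤ T.degree (f l) ∧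
      (T.Adj l (f l) ∨ ∃ u, T.Adj l u ∧ T.degree u = 2 ∧ T.Adj u (f l)) := by
    intro l hl
    have hfl : f l = (exists_target T hT hcard hdeg2 hno l hl).choose := by
      rw [hf]; exact dif_pos hl
    rw [hfl]
    exact (exists_target T hT hcard hdeg2 hno l hl).choose_spec
  apply Finset.card_le_card_of_injOn f
  · intro l hl
    simp only [Finset.coe_filter, Finset.mem_filter, Finset.mem_univ, true_and, Set.mem_setOf_eq] at hl ⊢
    exact (hspec l hl).1
  · intro l₁ hl₁ l₂ hl₂ heq
    simp only [Finset.coe_filter, Finset.mem_univ, true_and, Set.mem_setOf_eq] at hl₁ hl₂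
    by_contra hne
    obtain ⟨hd₁, hc₁⟩ := hspec l₁ hl₁
    obtain ⟨hd₂, hc₂⟩ := hspec l₂ hl₂
    set w := f l₁ with hw
    rw [← heq] at hc₂ hd₂
    have hwl₁ : w ≠ l₁ := by intro h; rw [h] at hd₁; omega
    have hwl₂ : w ≠ l₂ := by intro h; rw [h] at hd₂; omega
    rcases hc₁ with h₁ | ⟨u₁, hlu₁, hdu₁, huw₁⟩
    · rcases hc₂ with h₂ | ⟨u₂, hlu₂, hdu₂, huw₂⟩
      · exact (hno w).2.2 ⟨l₁, l₂, hne, h₁.symm, hl₁, h₂.symm, hl₂⟩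
      · exact (hno w).1 ⟨⟨l₁, h₁.symm, hl₁⟩, ⟨u₂, huw₂.symm, hdu₂, l₂, hlu₂.symm, hl₂⟩⟩
    · rcases hc₂ with h₂ | ⟨u₂, hlu₂, hdu₂, huw₂⟩
      · exact (hno w).1 ⟨⟨l₂, h₂.symm, hl₂⟩, ⟨u₁, huw₁.symm, hdu₁, l₁, hlu₁.symm, hl₁⟩⟩
      · have hu12 : u₁ ≠ u₂ := by
          rintro rfl
          have hsub : ({l₁, l₂, w} : Finset V) ⊆ T.neighborFinset u₁ := by
            intro x hx
            simp only [Finset.mem_insert, Finset.mem_singleton] at hx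
            rcases hx with rfl | rfl | rfl
            · exact (T.mem_neighborFinset _ _).mpr hlu₁.symm
            · exact (T.mem_neighborFinset _ _).mpr hlu₂.symm
            · exact (T.mem_neighborFinset _ _).mpr huw₁
          have hcard3 : ({l₁, l₂, w} : Finset V).card = 3 := by
            rw [Finset.card_insert_of_notMem (by simp [hne, Ne.symm hwl₁]),
              Finset.card_insert_of_notMem (by simp [Ne.symm hwl₂]),
              Finset.card_singleton]
          have := Finset.card_le_card hsub
          rw [hcard3] at this
          rw [SimpleGraph.degree] at hdu₁
          omega
        exact (hno w).2.1 ⟨u₁, u₂, hu12, huw₁.symm, hdu₁, ⟨l₁, hlu₁.symm, hl₁⟩,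
          huw₂.symm, hdu₂, ⟨l₂, hlu₂.symm, hl₂⟩⟩
end
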